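/- Let (𝔥, ν, S) be a Hom-Lie algebra over a field F of characteristic zero with ν-equivariant S. Let ν* : 𝔥 → gl(𝔥*) be defined by (ν*(x)(α))(y) := −α(ν(x,y)). On g := 𝔥 ⊕ 𝔥* define μ(x+α, y+β) := ν(x,y) + ν*(x)(β) − ν*(y)(α), T(x+α) := S(x) + S*(α) (S* the dual map of S), and B(x+α, y+β) := α(y) + β(x). Then (g, μ, T, B) is a quadratic Hom-Lie algebra with μ-equivariant T. -/
import Mathlib


/-- From a Hom-Lie algebra `(𝔥, ν, S)` with `ν`-equivariant `S` one obtains a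
quadratic Hom-Lie algebra structure `(g = 𝔥 ⊕ 𝔥*, μ, T, B)` with `μ`-equivariant `T`,
where `μ(x+α, y+β) = ν(x,y) + ν*(x)(β) − ν*(y)(α)`, `T(x+α) = S(x) + S*(α)` and
`B(x+α, y+β) = α(y) + β(x)`. -/
theorem double_extension_on_h_oplus_dual
    {F : Type*} [Field F] [CharZero F]
    {H : Type*} [AddCommGroup H] [Module F H] [FiniteDimensional F H]
    (ν : H →ₗ[F] H →ₗ[F] H) (S : H →ₗ[F] H)
    (hskew : ∀ x y : H, ν x y = - ν y x)
    (hjac : ∀ x y z : H, ν (S x) (ν y z) + ν (S y) (ν z x) + ν (S z) (ν x y) = 0)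
    (hequiv : ∀ x y : H, S (ν x y) = ν (S x) y)
    (μ : (H × Module.Dual F H) → (H × Module.Dual F H) → (H × Module.Dual F H))
    (hμ : ∀ (x y : H) (α β : Module.Dual F H),
      μ (x, α) (y, β) = (ν x y, - (β.comp (ν x)) + α.comp (ν y)))
    (T : (H × Module.Dual F H) → (H × Module.Dual F H))
    (hT : ∀ (x : H) (α : Module.Dual F H), T (x, α) = (S x, α.comp S))
    (B : (H × Module.Dual F H) → (H × Module.Dual F H) → F)
    (hB : ∀ (x y : H) (α β : Module.Dual F H), B (x, α) (y, β) = α y + β x) :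
    (∀ p q : H × Module.Dual F H, μ p q = - μ q p) ∧
    (∀ p q s : H × Module.Dual F H,
      μ (T p) (μ q s) + μ (T q) (μ s p) + μ (T s) (μ p q) = 0) ∧
    (∀ p q : H × Module.Dual F H, T (μ p q) = μ (T p) q) ∧
    (∀ p q : H × Module.Dual F H, B p q = B q p) ∧
    (∀ p : H × Module.Dual F H, (∀ q : H × Module.Dual F H, B p q = 0) → p = 0) ∧
    (∀ p q s : H × Module.Dual F H, B (μ p q) s = B p (μ q s)) ∧
    (∀ p q : H × Module.Dual F H, B (T p) q = B p (T q)) := by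
  have hSmove : ∀ x w : H, ν x (S w) = ν (S x) w := by
    intro x w
    rw [hskew x (S w), ← hequiv, hskew w x, map_neg, neg_neg, hequiv]
  have inner : ∀ a b w : H, ν a (ν (S b) w) = ν (S a) (ν b w) := by
    intro a b w
    rw [← hequiv b w, hSmove]
  have key : ∀ y z w : H, ν (S (ν y z)) w = ν (S y) (ν z w) - ν (S z) (ν y w) := by
    intro y z w
    have h := hjac y z w
    rw [hskew w y, map_neg] at h
    rw [← hSmove w (ν y z), hskew w (S (ν y z))] at h
    rw [add_neg_eq_zero] at h
    rw [← h, sub_eq_add_neg]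
  have key2 : ∀ y z w : H, ν (ν (S y) z) w = ν (S y) (ν z w) - ν (S z) (ν y w) := by
    intro y z w
    rw [← hequiv, key]
  refine ⟨?_, ?_, ?_, ?_, ?_, ?_, ?_⟩
  · rintro ⟨x, α⟩ ⟨y, β⟩
    rw [hμ x y, hμ y x, Prod.neg_mk, Prod.ext_iff]
    constructor
    · exact hskew x y
    · simp only
      abel
  · rintro ⟨x, α⟩ ⟨y, β⟩ ⟨z, γ⟩
    simp only [hT, hμ]
    rw [Prod.ext_iff]
    constructor
    · simpa using hjac x y z
    · simp only [Prod.snd_add, Prod.snd_zero]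
      ext w
      simp only [LinearMap.add_apply, LinearMap.neg_apply, LinearMap.comp_apply,
        LinearMap.zero_apply, map_add, map_neg, map_sub]
      simp only [inner, hequiv, key, key2, map_sub]
      ring
  · rintro ⟨x, α⟩ ⟨y, β⟩
    rw [hμ x y, hT, hT, hμ, Prod.ext_iff]
    constructor
    · exact hequiv x y
    · ext w
      simp only [LinearMap.add_apply, LinearMap.neg_apply, LinearMap.comp_apply, map_add, map_neg]
      simp only [hSmove, hequiv]
  · rintro ⟨x, α⟩ ⟨y, β⟩
    rw [hB, hB]
    ring
  · rintro ⟨x, α⟩ h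
    have h1 : α = 0 := by
      ext y
      have := h (y, 0)
      rw [hB] at this
      simpa using this
    have h2 : x = 0 := by
      rw [← Module.forall_dual_apply_eq_zero_iff F x]
      intro β
      have := h (0, β)
      rw [hB] at this
      simpa using this
    simp [h1, h2, Prod.ext_iff]
  · rintro ⟨x, α⟩ ⟨y, β⟩ ⟨z, γ⟩
    rw [hμ x y, hμ y z, hB, hB]
    simp only [LinearMap.add_apply, LinearMap.neg_apply, LinearMap.comp_apply]
    rw [hskew y x, hskew z x, map_neg, map_neg]
    ring
  · rintro ⟨x, α⟩ ⟨y, β⟩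
    rw [hT, hT, hB, hB]
    simp only [LinearMap.comp_apply]
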